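/- Let T be a finite N₀-ary tree with root ∅ and let V(T, v) denote the outcome of a monotone voting algorithm with nondecreasing aggregation function Θ and iid Bernoulli(q) leaf inputs v. Suppose the univariate g-function satisfies g(p) < p for all p ∈ (a, q] where a is a fixed point of g and a < q. Then if T₁ ⊆ T₂ as labelled N₀-ary trees, P[V(∅; T₂, q) = 1] ≤ P[V(∅; T₁, q) = 1]; in particular, if T contains the regular N₀-ary tree of height n, then P[V(∅; T, q) = 1] ≤ g^{(n)}(q). -/

import Mathlib

/-- Finite `N₀`-ary trees with full families. -/
inductive NTree (N₀ : ℕ) : Type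
  | leaf : NTree N₀
  | node : (Fin N₀ → NTree N₀) → NTree N₀

namespace NTree

/-- Labelled subtree relation: `Sub T₁ T₂` means `T₂` contains `T₁`. -/
inductive Sub {N₀ : ℕ} : NTree N₀ → NTree N₀ → Prop
  | leaf (t : NTree N₀) : Sub .leaf t
  | node {c₁ c₂ : Fin N₀ → NTree N₀} :
      (∀ i, Sub (c₁ i) (c₂ i)) → Sub (.node c₁) (.node c₂)

/-- The regular `N₀`-ary tree of height `n`. -/
def regular (N₀ : ℕ) : ℕ → NTree N₀
  | 0 => .leaf
  | n + 1 => .node fun _ => regular N₀ n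

/-- The probability that the root vote is `1` for the monotone voting algorithm on the
tree, with iid `Bernoulli(q)` leaf inputs and multivariate g-function `G`: each vertex's
vote is `Bernoulli(Θ(children's votes))`, so by independence the root probability is
obtained by propagating `G` from the leaves. -/
noncomputable def rootProb {N₀ : ℕ} (G : (Fin N₀ → ℝ) → ℝ) (q : ℝ) : NTree N₀ → ℝ
  | .leaf => q
  | .node c => G fun i => rootProb G q (c i)

end NTree

section helpers

variable {N₀ : ℕ} {Θ : (Fin N₀ → Bool) → ℝ} {G : (Fin N₀ → ℝ) → ℝ}
variable (hG : ∀ p : Fin N₀ → ℝ,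
      G p = ∑ v : Fin N₀ → Bool, (∏ i, if v i then p i else 1 - p i) * Θ v)

lemma weight_nonneg (p : Fin N₀ → ℝ) (hp0 : ∀ i, 0 ≤ p i) (hp1 : ∀ i, p i ≤ 1)
    (v : Fin N₀ → Bool) (s : Finset (Fin N₀)) :
    0 ≤ ∏ i ∈ s, (if v i then p i else 1 - p i) := by
  refine Finset.prod_nonneg fun i _ => ?_
  split
  · exact hp0 i
  · linarith [hp1 i]

lemma sum_weights (p : Fin N₀ → ℝ) :
    ∑ v : Fin N₀ → Bool, ∏ i, (if v i then p i else 1 - p i) = 1 := by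
  have h := Fintype.prod_sum (fun (i : Fin N₀) (b : Bool) => if b then p i else (1:ℝ) - p i)
  rw [← h]
  simp

include hG in
lemma G_nonneg (hΘ0 : ∀ v, 0 ≤ Θ v) (p : Fin N₀ → ℝ)
    (hp0 : ∀ i, 0 ≤ p i) (hp1 : ∀ i, p i ≤ 1) : 0 ≤ G p := by
  rw [hG]
  exact Finset.sum_nonneg fun v _ =>
    mul_nonneg (weight_nonneg p hp0 hp1 v _) (hΘ0 v)

include hG in
lemma G_le_one (hΘ1 : ∀ v, Θ v ≤ 1) (p : Fin N₀ → ℝ)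
    (hp0 : ∀ i, 0 ≤ p i) (hp1 : ∀ i, p i ≤ 1) : G p ≤ 1 := by
  rw [hG]
  calc ∑ v : Fin N₀ → Bool, (∏ i, if v i then p i else 1 - p i) * Θ v
      ≤ ∑ v : Fin N₀ → Bool, (∏ i, if v i then p i else 1 - p i) := by
        refine Finset.sum_le_sum fun v _ => ?_
        exact mul_le_of_le_one_right (weight_nonneg p hp0 hp1 v _) (hΘ1 v)
    _ = 1 := sum_weights p

include hG in
lemma G_update_mono (hΘmono : ∀ v w : Fin N₀ → Bool, (∀ i, v i ≤ w i) → Θ v ≤ Θ w)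
    (p : Fin N₀ → ℝ) (hp0 : ∀ i, 0 ≤ p i) (hp1 : ∀ i, p i ≤ 1)
    (j : Fin N₀) (x y : ℝ) (hxy : x ≤ y) :
    G (Function.update p j x) ≤ G (Function.update p j y) := by
  classical
  set c : (Fin N₀ → Bool) → ℝ :=
    fun v => ∏ i ∈ Finset.univ.erase j, (if v i then p i else 1 - p i) with hc
  have hc0 : ∀ v, 0 ≤ c v := fun v => weight_nonneg p hp0 hp1 v _
  have key : ∀ z : ℝ, ∀ v : Fin N₀ → Bool,
      (∏ i, if v i then Function.update p j z i else 1 - Function.update p j z i)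
        = (if v j then z else 1 - z) * c v := by
    intro z v
    rw [← Finset.mul_prod_erase _ _ (Finset.mem_univ j)]
    simp only [Function.update_self]
    congr 1
    refine Finset.prod_congr rfl fun i hi => ?_
    rw [Function.update_of_ne (Finset.ne_of_mem_erase hi)]
  have hGxy : ∀ z : ℝ, G (Function.update p j z)
      = ∑ v : Fin N₀ → Bool, (if v j then z else 1 - z) * c v * Θ v := by
    intro z
    rw [hG]
    exact Finset.sum_congr rfl fun v _ => by rw [key]
  rw [hGxy, hGxy, ← sub_nonneg, ← Finset.sum_sub_distrib]
  have split : ∀ v : Fin N₀ → Bool,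
      (if v j then y else 1 - y) * c v * Θ v - (if v j then x else 1 - x) * c v * Θ v
        = (if v j then y - x else x - y) * (c v * Θ v) := by
    intro v; by_cases h : v j <;> simp [h] <;> ring
  rw [Finset.sum_congr rfl fun v _ => split v]
  rw [← Finset.sum_filter_add_sum_filter_not Finset.univ (fun v => v j = true)]
  have hre : ∑ v ∈ Finset.univ.filter (fun v : Fin N₀ → Bool => v j = true),
      (if v j then y - x else x - y) * (c v * Θ v)
      = ∑ v ∈ Finset.univ.filter (fun v : Fin N₀ → Bool => ¬ v j = true),
      (y - x) * (c v * Θ (Function.update v j true)) := by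
    refine Finset.sum_bij' (fun v _ => Function.update v j false)
      (fun v _ => Function.update v j true) ?_ ?_ ?_ ?_ ?_
    · intro v hv; simp
    · intro v hv; simp
    · intro v hv
      simp only [Finset.mem_filter] at hv
      funext i
      by_cases h : i = j
      · subst h; simp [hv.2]
      · simp [Function.update_of_ne h]
    · intro v hv
      simp only [Finset.mem_filter] at hv
      funext i
      by_cases h : i = j
      · subst h; simp at hv; simp [hv]
      · simp [Function.update_of_ne h]
    · intro v hv
      simp only [Finset.mem_filter] at hv
      have hcv : c (Function.update v j false) = c v := by
        refine Finset.prod_congr rfl fun i hi => ?_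
        rw [Function.update_of_ne (Finset.ne_of_mem_erase hi)]
      have hupd : Function.update (Function.update v j false) j true
          = Function.update v j true := by
        funext i; by_cases h : i = j
        · subst h; simp
        · simp [Function.update_of_ne h]
      have hfix : Function.update v j true = v := by
        funext i; by_cases h : i = j
        · subst h; simp [hv.2]
        · simp [Function.update_of_ne h]
      rw [hv.2, hcv, hupd, hfix]
      simp
  rw [hre, ← Finset.sum_add_distrib]
  refine Finset.sum_nonneg fun v hv => ?_
  simp only [Finset.mem_filter, Finset.mem_univ, true_and] at hv
  rw [if_neg hv]
  have hle : Θ v ≤ Θ (Function.update v j true) := by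
    refine hΘmono _ _ fun i => ?_
    by_cases h : i = j
    · subst h; simp
    · simp [Function.update_of_ne h]
  have : (y - x) * (c v * Θ (Function.update v j true)) + (x - y) * (c v * Θ v)
      = ((y - x) * c v) * (Θ (Function.update v j true) - Θ v) := by ring
  rw [this]
  exact mul_nonneg (mul_nonneg (by linarith) (hc0 v)) (by linarith)

include hG in
lemma G_mono (hΘmono : ∀ v w : Fin N₀ → Bool, (∀ i, v i ≤ w i) → Θ v ≤ Θ w)
    (p r : Fin N₀ → ℝ) (hp0 : ∀ i, 0 ≤ p i) (hpr : ∀ i, p i ≤ r i)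
    (hr1 : ∀ i, r i ≤ 1) : G p ≤ G r := by
  classical
  set m : ℕ → Fin N₀ → ℝ := fun k i => if (i : ℕ) < k then r i else p i with hm
  have hbd : ∀ k i, 0 ≤ m k i ∧ m k i ≤ 1 := by
    intro k i
    simp only [hm]
    split
    · exact ⟨le_trans (hp0 i) (hpr i), hr1 i⟩
    · exact ⟨hp0 i, le_trans (hpr i) (hr1 i)⟩
  have step : ∀ k, G (m k) ≤ G (m (k + 1)) := by
    intro k
    by_cases hk : k < N₀
    · set j : Fin N₀ := ⟨k, hk⟩ with hj
      have h1 : m k = Function.update (m k) j (p j) := by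
        funext i
        rcases eq_or_ne i j with h | h
        · subst h; simp [hm, Function.update_self, hj]
        · rw [Function.update_of_ne h]
      have h2 : m (k + 1) = Function.update (m k) j (r j) := by
        funext i
        rcases eq_or_ne i j with h | h
        · subst h; simp [hm, hj]
        · rw [Function.update_of_ne h]
          have hij : (i : ℕ) ≠ k := fun hcc => h (Fin.ext hcc)
          simp only [hm]
          rcases Nat.lt_or_ge (i : ℕ) k with h' | h'
          · rw [if_pos h', if_pos (Nat.lt_succ_of_lt h')]
          · rw [if_neg (Nat.not_lt.2 h'),
              if_neg (by omega)]
      rw [h1, h2]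
      exact G_update_mono hG hΘmono (m k) (fun i => (hbd k i).1) (fun i => (hbd k i).2)
        j (p j) (r j) (hpr j)
    · have : m (k + 1) = m k := by
        funext i
        have : (i : ℕ) < k := lt_of_lt_of_le i.isLt (Nat.not_lt.1 hk)
        simp [hm, this, Nat.lt_succ_of_lt this]
      rw [this]
  have mono : Monotone fun k => G (m k) := monotone_nat_of_le_succ step
  have h0 : m 0 = p := by funext i; simp [hm]
  have hN : m N₀ = r := by funext i; simp [hm, i.isLt]
  simpa only [h0, hN] using mono (Nat.zero_le N₀)

end helpers

/-- Monotonicity of the voting outcome in the tree: if `g(p) < p` on `(a,q]` for a fixed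
point `a < q`, then `T₁ ⊆ T₂` implies `P[V(∅;T₂,q)=1] ≤ P[V(∅;T₁,q)=1]`; in particular a
tree containing the regular `N₀`-ary tree of height `n` has root probability `≤ g^{(n)}(q)`. -/
theorem stmt12 (N₀ : ℕ) (Θ : (Fin N₀ → Bool) → ℝ)
    (hΘrange : ∀ v, Θ v ∈ Set.Icc (0:ℝ) 1)
    (hΘmono : ∀ v w : Fin N₀ → Bool, (∀ i, v i ≤ w i) → Θ v ≤ Θ w)
    (G : (Fin N₀ → ℝ) → ℝ)
    (hG : ∀ p : Fin N₀ → ℝ,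
      G p = ∑ v : Fin N₀ → Bool, (∏ i, if v i then p i else 1 - p i) * Θ v)
    (g : ℝ → ℝ) (hg : ∀ p, g p = G fun _ => p)
    (a q : ℝ) (ha0 : 0 ≤ a) (hfix : g a = a) (haq : a < q) (hq1 : q ≤ 1)
    (hdec : ∀ p ∈ Set.Ioc a q, g p < p) :
    (∀ T₁ T₂ : NTree N₀, NTree.Sub T₁ T₂ →
        NTree.rootProb G q T₂ ≤ NTree.rootProb G q T₁) ∧
    (∀ (n : ℕ) (T : NTree N₀), NTree.Sub (NTree.regular N₀ n) T →
        NTree.rootProb G q T ≤ g^[n] q) := by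
  have hq0 : 0 ≤ q := le_trans ha0 haq.le
  have hgq : g q < q := hdec q ⟨haq, le_refl q⟩
  -- rootProb is in [0, q]
  have hbound : ∀ T : NTree N₀, 0 ≤ NTree.rootProb G q T ∧ NTree.rootProb G q T ≤ q := by
    intro T
    induction T with
    | leaf => exact ⟨hq0, le_refl q⟩
    | node c ih =>
      constructor
      · exact G_nonneg hG (fun v => (hΘrange v).1) _ (fun i => (ih i).1)
          (fun i => le_trans (ih i).2 hq1)
      · calc NTree.rootProb G q (.node c) = G fun i => NTree.rootProb G q (c i) := rfl
          _ ≤ G fun _ => q := G_mono hG hΘmono _ _ (fun i => (ih i).1)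
              (fun i => (ih i).2) (fun _ => hq1)
          _ = g q := (hg q).symm
          _ ≤ q := hgq.le
  constructor
  · intro T₁ T₂ hsub
    induction hsub with
    | leaf t => exact (hbound t).2
    | node h ih =>
      exact G_mono hG hΘmono _ _ (fun i => (hbound _).1) (fun i => ih i)
        (fun i => le_trans (hbound _).2 hq1)
  · intro n T hsub
    have hreg : ∀ n : ℕ, NTree.rootProb G q (NTree.regular N₀ n) = g^[n] q := by
      intro n
      induction n with
      | zero => rfl
      | succ n ih =>
        rw [Function.iterate_succ_apply']
        calc NTree.rootProb G q (NTree.regular N₀ (n+1))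
            = G fun _ => NTree.rootProb G q (NTree.regular N₀ n) := rfl
          _ = g (NTree.rootProb G q (NTree.regular N₀ n)) := (hg _).symm
          _ = g (g^[n] q) := by rw [ih]
    -- monotonicity in the subtree
    have hmono : ∀ T₁ T₂ : NTree N₀, NTree.Sub T₁ T₂ →
        NTree.rootProb G q T₂ ≤ NTree.rootProb G q T₁ := by
      intro T₁ T₂ hsub
      induction hsub with
      | leaf t => exact (hbound t).2
      | node h ih =>
        exact G_mono hG hΘmono _ _ (fun i => (hbound _).1) (fun i => ih i)
          (fun i => le_trans (hbound _).2 hq1)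
    calc NTree.rootProb G q T ≤ NTree.rootProb G q (NTree.regular N₀ n) := hmono _ _ hsub
      _ = g^[n] q := hreg n
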